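/- Under the identification of H²(𝔻) with ℓ²(ℕ,ℂ), the Toeplitz operator T_φ with symbol φ ∈ L^∞(𝕋) acts on basis vectors by T_φ e_j = Σ_{m≥0} φ̂(m−j) e_m. Fix n ≥ 1 and let C_n be the block-reversal conjugation: C_n e_{nk+m} = e_{nk+(n−1−m)} for 0 ≤ m ≤ n−1, extended conjugate-linearly. If φ̂(nl) = φ̂(−nl) and φ̂(r+nl) = 0 for all l ∈ ℤ and 1 ≤ r ≤ n−1, then T_φ C_n = C_n T_{conj(φ)}. -/

import Mathlib

open scoped ComplexConjugate

/-- The Hardy space `H²(𝔻)`, identified with `ℓ²(ℕ, ℂ)` via `z^n ↦ e n`. -/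
noncomputable abbrev HardySpace := lp (fun _ : ℕ => ℂ) 2

/-- The standard basis vector `e j`, corresponding to `z^j`. -/
noncomputable def e (j : ℕ) : HardySpace := lp.single 2 j 1

/-- Coordinate evaluation as a continuous linear map. -/
noncomputable def evalCLM (i : ℕ) : HardySpace →L[ℂ] ℂ :=
  LinearMap.mkContinuous
    { toFun := fun f => f i
      map_add' := fun f g => by simp
      map_smul' := fun c f => by simp }
    1
    (fun f => by show ‖f i‖ ≤ 1 * ‖f‖; simpa using lp.norm_apply_le_norm (p := 2) (by norm_num) f i)

@[simp] lemma evalCLM_apply (i : ℕ) (f : HardySpace) : evalCLM i f = f i := rfl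

lemma coord_hasSum (S : HardySpace →L[ℂ] HardySpace) (x : HardySpace) (p : ℕ) :
    HasSum (fun j => x j * (S (e j)) p) ((S x) p) := by
  have h1 : HasSum (fun i : ℕ => lp.single 2 i (x i)) x :=
    lp.hasSum_single (by norm_num) x
  have h2 := h1.mapL ((evalCLM p).comp S)
  convert h2 using 2 with j
  have hx : lp.single 2 j (x j) = x j • e j := by
    rw [e, ← lp.single_smul]
    norm_num
  simp [hx]
  simp

/-- The block-reversal permutation. -/
def sig (n : ℕ) : ℕ → ℕ := fun j => n * (j / n) + (n - 1 - j % n)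

lemma sigma_aux (n : ℕ) (hn : 1 ≤ n) (j : ℕ) :
    (n * (j / n) + (n - 1 - j % n)) / n = j / n ∧
    (n * (j / n) + (n - 1 - j % n)) % n = n - 1 - j % n := by
  have h : n - 1 - j % n < n := by omega
  constructor
  · rw [Nat.mul_add_div (by omega), Nat.div_eq_of_lt h]; omega
  · rw [Nat.mul_add_mod, Nat.mod_eq_of_lt h]

lemma sig_invol (n : ℕ) (hn : 1 ≤ n) : Function.Involutive (sig n) := by
  intro j
  obtain ⟨h1, h2⟩ := sigma_aux n hn j
  show n * ((sig n j) / n) + (n - 1 - (sig n j) % n) = j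
  unfold sig
  rw [h1, h2]
  have h3 := Nat.div_add_mod j n
  have h4 : j % n < n := Nat.mod_lt j hn
  generalize n * (j / n) = u at h3 ⊢
  omega

lemma zero_of_not_dvd (n : ℕ) (hn : 1 ≤ n) (φhat : ℤ → ℂ)
    (hzero : ∀ (l : ℤ) (r : ℕ), 1 ≤ r → r ≤ n - 1 → φhat ((r : ℤ) + n * l) = 0)
    (A : ℤ) (hA : ¬ (n : ℤ) ∣ A) : φhat A = 0 := by
  have hn' : (0 : ℤ) < n := by exact_mod_cast hn
  have h1 : 0 ≤ A % n := Int.emod_nonneg A (by omega)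
  have h2 : A % n < n := Int.emod_lt_of_pos A hn'
  have h3 : A % n ≠ 0 := fun h => hA (Int.dvd_of_emod_eq_zero h)
  have h4 : A = ((A % n).toNat : ℤ) + n * (A / n) := by
    rw [Int.toNat_of_nonneg h1]
    exact (Int.emod_add_mul_ediv A n).symm
  rw [h4]
  exact hzero (A / n) (A % n).toNat (by omega) (by omega)

lemma key (n : ℕ) (hn : 1 ≤ n) (φhat : ℤ → ℂ)
    (heven : ∀ l : ℤ, φhat ((n : ℤ) * l) = φhat (-((n : ℤ) * l)))
    (hzero : ∀ (l : ℤ) (r : ℕ), 1 ≤ r → r ≤ n - 1 → φhat ((r : ℤ) + n * l) = 0)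
    (A B : ℤ) (hmod : (n : ℤ) ∣ A - B) (hneg : (n : ℤ) ∣ A → B = -A) :
    φhat A = φhat B := by
  by_cases hA : (n : ℤ) ∣ A
  · obtain ⟨l, hl⟩ := hA
    rw [hneg ⟨l, hl⟩, hl, heven l]
  · have hB : ¬ (n : ℤ) ∣ B := fun h => hA (by simpa using hmod.add h)
    rw [zero_of_not_dvd n hn φhat hzero A hA, zero_of_not_dvd n hn φhat hzero B hB]

lemma arith (n u u' m m' : ℤ) (hn : 1 ≤ n) (hu : n ∣ u) (hu' : n ∣ u')
    (hm : 0 ≤ m) (hm2 : m < n) (hm' : 0 ≤ m') (hm2' : m' < n) :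
    (n ∣ ((u + m) - (u' + (n - 1 - m'))) - ((u' + m') - (u + (n - 1 - m)))) ∧
    ((n ∣ (u + m) - (u' + (n - 1 - m'))) →
      (u' + m') - (u + (n - 1 - m)) = -((u + m) - (u' + (n - 1 - m')))) := by
  obtain ⟨a, rfl⟩ := hu
  obtain ⟨b, rfl⟩ := hu'
  constructor
  · exact ⟨2 * (a - b), by ring⟩
  · intro h
    have h2 : (m + m' - (n - 1)) =
        ((n * a + m) - (n * b + (n - 1 - m'))) - n * (a - b) := by ring
    have hs : n ∣ (m + m' - (n - 1)) := by
      rw [h2]; exact dvd_sub h ⟨a - b, rfl⟩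
    have h0 : m + m' - (n - 1) = 0 :=
      Int.eq_zero_of_abs_lt_dvd hs (by rw [abs_lt]; constructor <;> linarith)
    linarith

/-- Sufficiency: if `φhat (nl) = φhat (-nl)` and `φhat (r+nl) = 0` for all `l ∈ ℤ`,
`1 ≤ r ≤ n-1`, then `T_φ C_n = C_n T_{conj φ}`, where `T_φ` acts on the basis by
`(T_φ e_j)_m = φhat (m-j)`, `T_{conj φ}` by `(T_{conj φ} e_j)_m = conj (φhat (j-m))`, and
`C_n` is the block-reversal conjugation. -/
theorem toeplitz_Cn_symmetric_of_coeff (n : ℕ) (hn : 1 ≤ n) (φhat : ℤ → ℂ)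
    (T Tconj : HardySpace →L[ℂ] HardySpace)
    (hT : ∀ j m : ℕ, (T (e j)) m = φhat ((m : ℤ) - (j : ℤ)))
    (hTconj : ∀ j m : ℕ, (Tconj (e j)) m = conj (φhat ((j : ℤ) - (m : ℤ))))
    (C : HardySpace → HardySpace)
    (hC : ∀ (a : HardySpace) (k m : ℕ), m < n →
      (C a) (n * k + m) = conj (a (n * k + (n - 1 - m))))
    (heven : ∀ l : ℤ, φhat ((n : ℤ) * l) = φhat (-((n : ℤ) * l)))
    (hzero : ∀ (l : ℤ) (r : ℕ), 1 ≤ r → r ≤ n - 1 → φhat ((r : ℤ) + n * l) = 0) :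
    ∀ x, T (C x) = C (Tconj x) := by
  have hn' : 0 < n := hn
  -- C acts coordinatewise via `sig`
  have hCx : ∀ (a : HardySpace) (q : ℕ), (C a) q = conj (a (sig n q)) := by
    intro a q
    have h4 : q % n < n := Nat.mod_lt q hn'
    have h := hC a (q / n) (q % n) h4
    rw [Nat.div_add_mod q n] at h
    exact h
  intro x
  refine lp.ext (funext fun p => ?_)
  show (T (C x)) p = (C (Tconj x)) p
  -- termwise key identity
  have hterm : ∀ j : ℕ, φhat ((p : ℤ) - (sig n j : ℤ)) = φhat ((j : ℤ) - (sig n p : ℤ)) := by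
    intro j
    set a := p / n with ha
    set b := p % n with hb
    set a' := j / n with ha'
    set b' := j % n with hb'
    have hp : n * a + b = p := Nat.div_add_mod p n
    have hj : n * a' + b' = j := Nat.div_add_mod j n
    have hbn : b < n := Nat.mod_lt p hn'
    have hbn' : b' < n := Nat.mod_lt j hn'
    have hsp : sig n p = n * a + (n - 1 - b) := rfl
    have hsj : sig n j = n * a' + (n - 1 - b') := rfl
    obtain ⟨H1, H2⟩ := arith (n : ℤ) ((n * a : ℕ) : ℤ) ((n * a' : ℕ) : ℤ)
      ((b : ℕ) : ℤ) ((b' : ℕ) : ℤ) (by exact_mod_cast hn)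
      ⟨(a : ℤ), by push_cast; ring⟩ ⟨(a' : ℤ), by push_cast; ring⟩
      (by positivity) (by exact_mod_cast hbn) (by positivity) (by exact_mod_cast hbn')
    have e1 : (p : ℤ) - (sig n j : ℤ) =
        (((n * a : ℕ) : ℤ) + ((b : ℕ) : ℤ)) - (((n * a' : ℕ) : ℤ) + ((n : ℤ) - 1 - ((b' : ℕ) : ℤ))) := by
      rw [hsj]; omega
    have e2 : (j : ℤ) - (sig n p : ℤ) =
        (((n * a' : ℕ) : ℤ) + ((b' : ℕ) : ℤ)) - (((n * a : ℕ) : ℤ) + ((n : ℤ) - 1 - ((b : ℕ) : ℤ))) := by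
      rw [hsp]; omega
    rw [e1, e2]
    exact key n hn φhat heven hzero _ _ H1 H2
  -- LHS as a sum
  have hL : HasSum (fun j => conj (x j) * φhat ((p : ℤ) - (sig n j : ℤ))) ((T (C x)) p) := by
    have h1 := coord_hasSum T (C x) p
    simp only [hT] at h1
    have h2 : (fun j : ℕ => (C x) j * φhat ((p : ℤ) - (j : ℤ))) =
        (fun j : ℕ => conj (x (sig n j)) * φhat ((p : ℤ) - (j : ℤ))) :=
      funext fun j => by rw [hCx]
    rw [h2] at h1
    have h3 := (Equiv.hasSum_iff ((sig_invol n hn).toPerm (sig n))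
      (f := fun j : ℕ => conj (x (sig n j)) * φhat ((p : ℤ) - (j : ℤ)))).mpr h1
    refine h3.congr_fun fun j => ?_
    simp [Function.comp, Function.Involutive.coe_toPerm, sig_invol n hn j]
  -- RHS as a sum
  have hR : HasSum (fun j => conj (x j) * φhat ((j : ℤ) - (sig n p : ℤ)))
      (conj ((Tconj x) (sig n p))) := by
    have h1 := coord_hasSum Tconj x (sig n p)
    simp only [hTconj] at h1
    have h2 := h1.map (starRingEnd ℂ) continuous_star
    refine h2.congr_fun fun j => ?_
    simp [Function.comp]
  rw [hCx (Tconj x) p]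
  have heq : (fun j : ℕ => conj (x j) * φhat ((p : ℤ) - (sig n j : ℤ))) =
      (fun j : ℕ => conj (x j) * φhat ((j : ℤ) - (sig n p : ℤ))) :=
    funext fun j => by rw [hterm j]
  rw [heq] at hL
  exact hL.unique hR
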